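/- Let θ_1, …, θ_n ∈ ℝ and σ_1, …, σ_n ∈ {0, 1}. Suppose that for every integer vector (ℓ_1, …, ℓ_n) with Σ ℓ_r θ_r = 0 one has Σ_{r: σ_r = 1} ℓ_r ≡ 0 (mod 2). Then for every ε > 0 there exists t ∈ ℝ such that |cos(t θ_r) - (-1)^{σ_r}| < ε for all r = 1, …, n. -/

import Mathlib

open Complex Filter Topology

section Aux19

private lemma avg_exp_tendsto19 (δ : ℝ) :
    Tendsto (fun T : ℝ => (T:ℂ)⁻¹ * ∫ t in (0:ℝ)..T, Complex.exp (δ * t * I)) atTop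
      (𝓝 (if δ = 0 then 1 else 0)) := by
  rcases eq_or_ne δ 0 with rfl | hδ
  · rw [if_pos rfl]
    have h : ∀ᶠ T : ℝ in atTop, (1:ℂ) = (T:ℂ)⁻¹ * (∫ t in (0:ℝ)..T, Complex.exp ((0:ℝ) * t * I)) := by
      filter_upwards [eventually_gt_atTop (0:ℝ)] with T hT
      norm_num
      field_simp [Complex.ofReal_ne_zero.2 hT.ne']
    exact Tendsto.congr' h tendsto_const_nhds
  · rw [if_neg hδ]
    have hc : ((δ:ℂ) * I) ≠ 0 :=
      mul_ne_zero (Complex.ofReal_ne_zero.2 hδ) Complex.I_ne_zero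
    have key : ∀ T : ℝ, (∫ t in (0:ℝ)..T, Complex.exp (δ * t * I))
        = (Complex.exp (δ * T * I) - 1) / ((δ:ℂ) * I) := by
      intro T
      have e : ∀ t : ℝ, (δ:ℂ) * t * I = ((δ:ℂ) * I) * t := by intro t; ring
      simp only [e]
      rw [integral_exp_mul_complex hc]
      norm_num
    have hnorm : ∀ T : ℝ, ‖(Complex.exp (δ * T * I) - 1) / ((δ:ℂ) * I)‖ ≤ 2 / |δ| := by
      intro T
      rw [norm_div]
      have h1 : ‖Complex.exp (δ * T * I) - 1‖ ≤ 2 := by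
        calc ‖Complex.exp (δ * T * I) - 1‖ ≤ ‖Complex.exp (δ * T * I)‖ + ‖(1:ℂ)‖ :=
            norm_sub_le _ _
        _ ≤ 2 := by
            have e2 : (δ:ℂ) * T * I = ((δ * T : ℝ) : ℂ) * I := by push_cast; ring
            rw [e2, Complex.norm_exp_ofReal_mul_I]
            norm_num
      have h2 : ‖(δ:ℂ) * I‖ = |δ| := by
        simp
      rw [h2]
      gcongr
    apply squeeze_zero_norm' (a := fun T : ℝ => (2 / |δ|) * T⁻¹)
    · filter_upwards [eventually_gt_atTop (0:ℝ)] with T hT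
      rw [key T, norm_mul]
      have hT' : ‖(T:ℂ)⁻¹‖ = T⁻¹ := by
        rw [norm_inv, Complex.norm_real, Real.norm_of_nonneg hT.le]
      rw [hT', mul_comm]
      exact mul_le_mul_of_nonneg_right (hnorm T) (inv_nonneg.2 hT.le)
    · rw [show (0:ℝ) = (2/|δ|) * 0 by ring]
      exact tendsto_inv_atTop_zero.const_mul _

private lemma bohr_coeff19 {ι : Type*} (s : Finset ι) (c : ι → ℂ) (β : ι → ℝ) (γ : ℝ) (M : ℝ)
    (hM : ∀ t : ℝ, ‖∑ m ∈ s, c m * Complex.exp (β m * t * I)‖ ≤ M) :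
    ‖∑ m ∈ s.filter (fun m => β m = γ), c m‖ ≤ M := by
  set F : ℝ → ℂ := fun t => ∑ m ∈ s, c m * Complex.exp (β m * t * I) with hF
  set A : ℝ → ℂ := fun T => (T:ℂ)⁻¹ * ∫ t in (0:ℝ)..T, F t * Complex.exp ((-γ : ℝ) * t * I)
    with hA
  have hint : ∀ (m : ι) (T : ℝ), IntervalIntegrable
      (fun t : ℝ => c m * Complex.exp ((β m - γ : ℝ) * t * I)) MeasureTheory.volume 0 T := by
    intro m T
    apply Continuous.intervalIntegrable
    fun_prop
  have hAeq : ∀ T : ℝ, A T = ∑ m ∈ s, c m *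
      ((T:ℂ)⁻¹ * ∫ t in (0:ℝ)..T, Complex.exp ((β m - γ : ℝ) * t * I)) := by
    intro T
    have e1 : ∀ t : ℝ, F t * Complex.exp ((-γ : ℝ) * t * I)
        = ∑ m ∈ s, c m * Complex.exp ((β m - γ : ℝ) * t * I) := by
      intro t
      rw [hF, Finset.sum_mul]
      refine Finset.sum_congr rfl fun m _ => ?_
      rw [mul_assoc, ← Complex.exp_add]
      congr 2
      push_cast
      ring
    simp only [hA, e1]
    rw [intervalIntegral.integral_finset_sum (fun m _ => hint m T), Finset.mul_sum]
    refine Finset.sum_congr rfl fun m _ => ?_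
    rw [intervalIntegral.integral_const_mul]
    ring
  have hlim : Tendsto A atTop (𝓝 (∑ m ∈ s.filter (fun m => β m = γ), c m)) := by
    have h2 : Tendsto A atTop (𝓝 (∑ m ∈ s, c m * (if β m - γ = 0 then 1 else 0))) := by
      rw [show A = fun U : ℝ => ∑ m ∈ s, c m *
        ((U:ℂ)⁻¹ * ∫ t in (0:ℝ)..U, Complex.exp ((β m - γ : ℝ) * t * I)) from funext hAeq]
      exact tendsto_finset_sum _ fun m _ => (avg_exp_tendsto19 (β m - γ)).const_mul (c m)
    convert h2 using 2
    rw [Finset.sum_filter]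
    refine Finset.sum_congr rfl fun m _ => ?_
    by_cases hm : β m = γ <;> simp [hm, sub_eq_zero]
  refine le_of_tendsto hlim.norm ?_
  filter_upwards [eventually_gt_atTop (0:ℝ)] with T hT
  have hb : ‖∫ t in (0:ℝ)..T, F t * Complex.exp ((-γ : ℝ) * t * I)‖ ≤ M * |T - 0| := by
    apply intervalIntegral.norm_integral_le_of_norm_le_const
    intro x _
    have e3 : ((-γ:ℝ):ℂ) * x * I = ((-γ * x : ℝ):ℂ) * I := by push_cast; ring
    rw [norm_mul, e3, Complex.norm_exp_ofReal_mul_I, mul_one]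
    exact hM x
  rw [sub_zero, _root_.abs_of_nonneg hT.le] at hb
  have h4 : ‖A T‖ ≤ T⁻¹ * (M * T) := by
    rw [hA]
    simp only []
    rw [norm_mul, norm_inv, Complex.norm_real, Real.norm_of_nonneg hT.le]
    exact mul_le_mul_of_nonneg_left hb (inv_nonneg.2 hT.le)
  calc ‖A T‖ ≤ T⁻¹ * (M * T) := h4
  _ = M := by field_simp

private lemma expand_pow_prod19 {n : ℕ} (θ w : Fin n → ℝ) (k : ℕ) (t : ℝ) :
    (∏ r, (1 + Complex.exp ((t * θ r - w r : ℝ) * I))) ^ k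
      = ∑ m ∈ Fintype.piFinset (fun _ : Fin n => Finset.range (k+1)),
          ((∏ r, (k.choose (m r) : ℂ)) * Complex.exp ((-(∑ r, (m r : ℝ) * w r) : ℝ) * I))
            * Complex.exp (((∑ r, (m r : ℝ) * θ r) : ℝ) * t * I) := by
  have hfac : ∀ r : Fin n, (1 + Complex.exp ((t * θ r - w r : ℝ) * I)) ^ k
      = ∑ i ∈ Finset.range (k+1),
          (k.choose i : ℂ) * Complex.exp (((i : ℝ) * (t * θ r - w r) : ℝ) * I) := by
    intro r
    rw [add_comm (1:ℂ), add_pow]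
    refine Finset.sum_congr rfl fun i hi => ?_
    rw [one_pow, mul_one, ← Complex.exp_nat_mul]
    rw [mul_comm]
    congr 2
    push_cast
    ring
  rw [← Finset.prod_pow]
  simp only [hfac]
  rw [Finset.prod_univ_sum]
  refine Finset.sum_congr rfl fun m hm => ?_
  rw [Finset.prod_mul_distrib, ← Complex.exp_sum]
  rw [mul_assoc, ← Complex.exp_add]
  congr 2
  push_cast
  rw [neg_mul, Finset.sum_mul, Finset.sum_mul, Finset.sum_mul, ← Finset.sum_neg_distrib,
    ← Finset.sum_add_distrib]
  refine Finset.sum_congr rfl fun x _ => by ring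

private lemma normSq_one_add_exp19 (x : ℝ) :
    Complex.normSq (1 + Complex.exp ((x:ℝ) * I)) = 2 + 2 * Real.cos x := by
  rw [Complex.exp_mul_I]
  have e1 : (1 : ℂ) + (Complex.cos x + Complex.sin x * I)
      = ((1 + Real.cos x : ℝ) : ℂ) + ((Real.sin x : ℝ) : ℂ) * I := by
    push_cast [← Complex.ofReal_cos, ← Complex.ofReal_sin]
    ring
  rw [e1, Complex.normSq_add_mul_I]
  nlinarith [Real.sin_sq_add_cos_sq x]

end Aux19

/-- Kronecker-type approximation: if every integer relation
`Σ ℓ_r θ_r = 0` implies `Σ_{r : σ_r = 1} ℓ_r ≡ 0 (mod 2)`, then for every `ε > 0` there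
is `t ∈ ℝ` with `|cos(t θ_r) - (-1)^{σ_r}| < ε` for all `r`. -/
theorem stmt_19 {n : ℕ} (θ : Fin n → ℝ) (σ : Fin n → ℕ) (hσ : ∀ r, σ r = 0 ∨ σ r = 1)
    (h : ∀ ℓ : Fin n → ℤ, (∑ r, (ℓ r : ℝ) * θ r) = 0 →
      (2 : ℤ) ∣ ∑ r ∈ Finset.univ.filter (fun r => σ r = 1), ℓ r) :
    ∀ ε > 0, ∃ t : ℝ, ∀ r, |Real.cos (t * θ r) - (-1 : ℝ) ^ (σ r)| < ε := by
  by_contra hc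
  push_neg at hc
  obtain ⟨ε, hε, hfail⟩ := hc
  set w : Fin n → ℝ := fun r => σ r * Real.pi with hw
  -- rewrite the failure in terms of cosines of shifted angles
  have cosabs : ∀ (t : ℝ) (r : Fin n),
      |Real.cos (t * θ r) - (-1 : ℝ) ^ (σ r)| = 1 - Real.cos (t * θ r - w r) := by
    intro t r
    rcases hσ r with h0 | h1
    · rw [hw]
      simp only [h0]
      rw [pow_zero]
      norm_num
      rw [_root_.abs_of_nonpos (by nlinarith [Real.cos_le_one (t * θ r)])]
      ring
    · rw [hw]
      simp only [h1]
      rw [pow_one]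
      have e : t * θ r - (1:ℕ) * Real.pi = t * θ r - Real.pi := by push_cast; ring
      rw [e, Real.cos_sub_pi]
      rw [_root_.abs_of_nonneg (by nlinarith [Real.neg_one_le_cos (t * θ r)])]
      ring
  have hfail' : ∀ t : ℝ, ∃ r, Real.cos (t * θ r - w r) ≤ 1 - ε := by
    intro t
    obtain ⟨r, hr⟩ := hfail t
    exact ⟨r, by rw [cosabs t r] at hr; linarith⟩
  have hε2 : ε ≤ 2 := by
    obtain ⟨r, hr⟩ := hfail' 0
    nlinarith [Real.neg_one_le_cos (0 * θ r - w r)]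
  have hn : 0 < n := (hfail' 0).choose.pos
  set c : ℝ := 1 - ε / 2 with hcdef
  have hc0 : 0 ≤ c := by rw [hcdef]; linarith
  have hc1 : c < 1 := by rw [hcdef]; linarith
  -- the key inequality for every j
  have key : ∀ j : ℕ, (((2*j).choose j : ℝ)) ^ n ≤ ((4:ℝ)^n * c) ^ j := by
    intro j
    set k := 2 * j with hk
    set s := Fintype.piFinset (fun _ : Fin n => Finset.range (k+1)) with hs
    set cf : (Fin n → ℕ) → ℂ := fun m =>
      (∏ r, (k.choose (m r) : ℂ)) * Complex.exp ((-(∑ r, (m r : ℝ) * w r) : ℝ) * I) with hcf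
    set β : (Fin n → ℕ) → ℝ := fun m => ∑ r, (m r : ℝ) * θ r with hβ
    set m0 : Fin n → ℕ := fun _ => j with hm0
    -- pointwise bound
    have hM : ∀ t : ℝ, ‖∑ m ∈ s, cf m * Complex.exp (β m * t * I)‖ ≤ ((4:ℝ)^n * c) ^ j := by
      intro t
      rw [← expand_pow_prod19 θ w k t]
      obtain ⟨r0, hr0⟩ := hfail' t
      have hz : ‖(∏ r, (1 + Complex.exp ((t * θ r - w r : ℝ) * I))) ^ (2*j)‖
          = (Complex.normSq (∏ r, (1 + Complex.exp ((t * θ r - w r : ℝ) * I))))^j := by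
        rw [norm_pow, pow_mul, Complex.sq_norm]
      rw [hk, hz]
      apply pow_le_pow_left₀ (Complex.normSq_nonneg _)
      rw [map_prod]
      calc ∏ r, Complex.normSq (1 + Complex.exp ((t * θ r - w r : ℝ) * I))
          ≤ ∏ r, (if r = r0 then 4 - 2*ε else 4) := by
            apply Finset.prod_le_prod (fun r _ => Complex.normSq_nonneg _)
            intro r _
            rw [normSq_one_add_exp19]
            by_cases hr : r = r0
            · subst hr; rw [if_pos rfl]; linarith
            · rw [if_neg hr]; nlinarith [Real.cos_le_one (t * θ r - w r)]
        _ = (4 - 2*ε) * 4^(n-1) := by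
            rw [← Finset.mul_prod_erase Finset.univ _ (Finset.mem_univ r0), if_pos rfl]
            congr 1
            rw [Finset.prod_congr rfl (fun x hx => if_neg (Finset.ne_of_mem_erase hx)),
              Finset.prod_const, Finset.card_erase_of_mem (Finset.mem_univ r0),
              Finset.card_univ, Fintype.card_fin]
        _ = (4:ℝ)^n * c := by
            rw [hcdef]
            have : (4:ℝ)^n = 4^(n-1) * 4 := by
              rw [← pow_succ]
              congr 1
              omega
            rw [this]
            ring
    have hcoeff := bohr_coeff19 s cf β (β m0) _ hM
    -- phases agree on the resonant set
    have hphase : ∀ m ∈ s.filter (fun m => β m = β m0),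
        Complex.exp ((-(∑ r, (m r : ℝ) * w r) : ℝ) * I)
          = Complex.exp ((-(∑ r, (m0 r : ℝ) * w r) : ℝ) * I) := by
      intro m hm
      rw [Finset.mem_filter] at hm
      set ℓ : Fin n → ℤ := fun r => (m r : ℤ) - j with hℓ
      have hrel : (∑ r, (ℓ r : ℝ) * θ r) = 0 := by
        have := hm.2
        simp only [hβ, hm0] at this
        have e0 : ∀ r : Fin n, ((ℓ r : ℝ)) * θ r = (m r : ℝ) * θ r - (j:ℝ) * θ r := by
          intro r; simp only [hℓ]; push_cast; ring
        rw [Finset.sum_congr rfl (fun r _ => e0 r), Finset.sum_sub_distrib, this, sub_self]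
      obtain ⟨d, hd⟩ := h ℓ hrel
      have hsum : (∑ r, (m r : ℝ) * w r) = (∑ r, (m0 r : ℝ) * w r) + 2 * Real.pi * d := by
        have e1 : (∑ r, (m r : ℝ) * w r) - (∑ r, (m0 r : ℝ) * w r)
            = ∑ r, (ℓ r : ℝ) * w r := by
          rw [← Finset.sum_sub_distrib]
          refine Finset.sum_congr rfl fun r _ => ?_
          simp only [hℓ, hm0]
          push_cast
          ring
        have e2 : (∑ r, (ℓ r : ℝ) * w r) = 2 * Real.pi * d := by
          rw [← Finset.sum_filter_add_sum_filter_not Finset.univ (fun r => σ r = 1)]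
          have ez : (∑ r ∈ Finset.univ.filter (fun r => ¬ σ r = 1), (ℓ r : ℝ) * w r) = 0 := by
            apply Finset.sum_eq_zero
            intro r hr
            rw [Finset.mem_filter] at hr
            rcases hσ r with h0 | h1
            · rw [hw]; simp [h0]
            · exact absurd h1 hr.2
          have eo : (∑ r ∈ Finset.univ.filter (fun r => σ r = 1), (ℓ r : ℝ) * w r)
              = (∑ r ∈ Finset.univ.filter (fun r => σ r = 1), (ℓ r : ℝ)) * Real.pi := by
            rw [Finset.sum_mul]
            refine Finset.sum_congr rfl fun r hr => ?_
            rw [Finset.mem_filter] at hr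
            rw [hw]
            simp [hr.2]
          rw [ez, eo, add_zero]
          have : (∑ r ∈ Finset.univ.filter (fun r => σ r = 1), (ℓ r : ℝ)) = 2 * d := by
            have := hd
            have hcast : ((∑ r ∈ Finset.univ.filter (fun r => σ r = 1), ℓ r : ℤ) : ℝ)
                = ∑ r ∈ Finset.univ.filter (fun r => σ r = 1), (ℓ r : ℝ) := by push_cast; rfl
            rw [← hcast, hd]
            push_cast
            ring
          rw [this]
          ring
        linarith [e1, e2]
      rw [Complex.exp_eq_exp_iff_exists_int]
      refine ⟨-d, ?_⟩
      rw [hsum]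
      push_cast
      ring
    -- compute the norm of the coefficient sum from below
    have hm0mem : m0 ∈ s.filter (fun m => β m = β m0) := by
      rw [Finset.mem_filter]
      constructor
      · rw [hs, Fintype.mem_piFinset]
        intro r
        rw [Finset.mem_range]
        show j < k + 1
        rw [hk]
        omega
      · rfl
    have hlow : (((2*j).choose j : ℝ)) ^ n ≤ ‖∑ m ∈ s.filter (fun m => β m = β m0), cf m‖ := by
      have ecast : (∑ m ∈ s.filter (fun m => β m = β m0), (∏ r, (k.choose (m r) : ℂ)))
          = ((∑ m ∈ s.filter (fun m => β m = β m0), ∏ r, (k.choose (m r) : ℝ) : ℝ) : ℂ) := by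
        push_cast
        rfl
      have e4 : (∑ m ∈ s.filter (fun m => β m = β m0), cf m)
          = ((∑ m ∈ s.filter (fun m => β m = β m0), ∏ r, (k.choose (m r) : ℝ) : ℝ) : ℂ)
            * Complex.exp ((-(∑ r, (m0 r : ℝ) * w r) : ℝ) * I) := by
        rw [← ecast, Finset.sum_mul]
        refine Finset.sum_congr rfl fun m hm => ?_
        rw [hcf]
        simp only []
        rw [hphase m hm]
      rw [e4, norm_mul]
      have e5 : ‖Complex.exp ((-(∑ r, (m0 r : ℝ) * w r) : ℝ) * I)‖ = 1 := by
        rw [Complex.norm_exp_ofReal_mul_I]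
      rw [e5, mul_one, Complex.norm_real, Real.norm_eq_abs]
      have hnonneg : (0:ℝ) ≤ ∑ m ∈ s.filter (fun m => β m = β m0), ∏ r, ((k.choose (m r) : ℝ)) :=
        Finset.sum_nonneg fun m _ => Finset.prod_nonneg fun r _ => by positivity
      rw [_root_.abs_of_nonneg hnonneg]
      calc (((2*j).choose j : ℝ)) ^ n = ∏ _r : Fin n, (((2*j).choose j : ℝ)) := by
            rw [Finset.prod_const, Finset.card_univ, Fintype.card_fin]
        _ = ∏ r, ((k.choose (m0 r) : ℝ)) := by rfl
        _ ≤ ∑ m ∈ s.filter (fun m => β m = β m0), ∏ r, ((k.choose (m r) : ℝ)) :=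
            Finset.single_le_sum (f := fun m => ∏ r, ((k.choose (m r) : ℝ)))
              (fun m _ => Finset.prod_nonneg fun r _ => by positivity) hm0mem
    exact hlow.trans hcoeff
  -- derive `1 ≤ (2j+1)^n * c^j` for all positive j
  have key2 : ∀ j : ℕ, 0 < j → (1:ℝ) ≤ (2*j+1:ℝ)^n * c^j := by
    intro j hj
    have hcb : (4:ℝ)^j ≤ (2*j+1:ℝ) * ((2*j).choose j : ℝ) := by
      have := Nat.four_pow_le_two_mul_self_mul_centralBinom j hj
      have h2 : (4:ℕ)^j ≤ (2*j+1) * (2*j).choose j := by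
        calc (4:ℕ)^j ≤ 2*j*((2*j).choose j) := this
        _ ≤ (2*j+1) * (2*j).choose j := Nat.mul_le_mul_right _ (by omega)
      exact_mod_cast h2
    have hkey := key j
    have h4pos : (0:ℝ) < ((4:ℝ)^n)^j := by positivity
    have step : ((4:ℝ)^n)^j ≤ (2*j+1:ℝ)^n * (((4:ℝ)^n)^j * c^j) := by
      calc ((4:ℝ)^n)^j = ((4:ℝ)^j)^n := by rw [← pow_mul, ← pow_mul, mul_comm]
        _ ≤ ((2*j+1:ℝ) * ((2*j).choose j : ℝ))^n := by
            apply pow_le_pow_left₀ (by positivity) hcb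
        _ = (2*j+1:ℝ)^n * (((2*j).choose j : ℝ))^n := mul_pow _ _ _
        _ ≤ (2*j+1:ℝ)^n * ((4:ℝ)^n * c)^j := by
            apply mul_le_mul_of_nonneg_left hkey (by positivity)
        _ = (2*j+1:ℝ)^n * (((4:ℝ)^n)^j * c^j) := by rw [mul_pow]
    nlinarith [step, h4pos, mul_pos h4pos (show (0:ℝ) < 1 by norm_num)]
  -- contradiction: (2j+1)^n c^j → 0
  have htend : Tendsto (fun j : ℕ => (j:ℝ)^n * c^j) atTop (𝓝 0) := by
    have hsum : Summable (fun j : ℕ => (j:ℝ)^n * c^j) := by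
      have : Summable (fun j : ℕ => ‖(j:ℝ)^n * c^j‖) := by
        have hcn : ‖c‖ < 1 := by rw [Real.norm_eq_abs, _root_.abs_of_nonneg hc0]; exact hc1
        simpa using summable_norm_pow_mul_geometric_of_norm_lt_one n hcn
      exact this.of_norm
    exact hsum.tendsto_atTop_zero
  have htend2 : Tendsto (fun j : ℕ => (3:ℝ)^n * ((j:ℝ)^n * c^j)) atTop (𝓝 0) := by
    simpa using htend.const_mul ((3:ℝ)^n)
  have hev : ∀ᶠ j : ℕ in atTop, (3:ℝ)^n * ((j:ℝ)^n * c^j) < 1 := by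
    have := htend2.eventually (eventually_lt_nhds (show (0:ℝ) < 1 by norm_num))
    exact this
  obtain ⟨N, hN⟩ := hev.exists_forall_of_atTop
  set j := max N 1 with hj
  have hj1 : 1 ≤ j := le_max_right _ _
  have hjN : N ≤ j := le_max_left _ _
  have h1 : (1:ℝ) ≤ (2*j+1:ℝ)^n * c^j := key2 j (by omega)
  have h2 : (2*j+1:ℝ)^n * c^j ≤ (3:ℝ)^n * ((j:ℝ)^n * c^j) := by
    have hle : (2*j+1:ℝ) ≤ 3*(j:ℝ) := by
      have : (1:ℝ) ≤ (j:ℝ) := by exact_mod_cast hj1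
      linarith
    calc (2*j+1:ℝ)^n * c^j ≤ (3*(j:ℝ))^n * c^j := by
          apply mul_le_mul_of_nonneg_right (pow_le_pow_left₀ (by positivity) hle n) (by positivity)
      _ = (3:ℝ)^n * ((j:ℝ)^n * c^j) := by rw [mul_pow]; ring
  linarith [hN j hjN]
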